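/- Assume w_j > 0 and κ‖G_j‖ + ‖S_j‖ > 0 for every j ∈ {1,…,n_c}, and let κ be a GLC. Let (x_k)_{k≥0} be a sequence in ℝ^{n_x} with x₀ ≠ 0 satisfying ‖x_k‖ ≤ c‖x₀‖β^k for all k ≥ 0, where c > 0 and β ∈ (0,1). For k ≥ 1 define D_k = {j : B(z*(x_{k−1}), κ‖x_k − x_{k−1}‖) ⊆ Z_j(x_k)} and I(x_k) = A(x_{k−1}) ∪ ({1,…,n_c} \ D_k). Set K̂ = max(K̂₁, K̂₂) where K̂₁ = max_j ⌈log_β (w_j / (c‖x₀‖β⁻¹(κ‖G_j‖ + ‖S_j‖)))⌉ and K̂₂ = max_j ⌈log_β (w_j / ρ_j)⌉ with ρ_j = c‖x₀‖(κ‖G_j‖(1 + β⁻¹) + ‖S_j‖ + ‖G_j H⁻¹Fᵀ‖ β⁻¹). Then for every k ≥ max(K̂, 1), the trimmed index set is empty: I(x_k) = ∅ (i.e., A(x_{k−1}) = ∅ and D_k = {1,…,n_c}). -/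

import Mathlib

open Matrix

/-- Euclidean norm of a plain vector, as `√(v ⬝ᵥ v)`. -/
noncomputable def vnorm {n : ℕ} (v : Fin n → ℝ) : ℝ := Real.sqrt (dotProduct v v)

lemma aux_dot_inner (n : ℕ) (v w : EuclideanSpace ℝ (Fin n)) :
    dotProduct v w = (inner ℝ v w : ℝ) := by
  simp [PiLp.inner_apply, dotProduct, mul_comm]

lemma vnorm_eq_norm (n : ℕ) (v : EuclideanSpace ℝ (Fin n)) : vnorm v = ‖v‖ := by
  rw [vnorm, aux_dot_inner, real_inner_self_eq_norm_mul_norm]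
  exact Real.sqrt_mul_self (norm_nonneg v)

lemma vnorm_nonneg {n : ℕ} (v : Fin n → ℝ) : 0 ≤ vnorm v := Real.sqrt_nonneg _

lemma vnorm_neg {n : ℕ} (v : Fin n → ℝ) : vnorm (-v) = vnorm v := by
  simp [vnorm, dotProduct]

lemma aux_dot_norm (n : ℕ) (v : EuclideanSpace ℝ (Fin n)) :
    dotProduct v v = ‖v‖ * ‖v‖ := by
  rw [aux_dot_inner, real_inner_self_eq_norm_mul_norm]

lemma aux_dot_le (n : ℕ) (v w : EuclideanSpace ℝ (Fin n)) :
    dotProduct v w ≤ ‖v‖ * ‖w‖ := by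
  rw [aux_dot_inner]; exact real_inner_le_norm v w

lemma aux_dot_le' (n : ℕ) (v : Fin n → ℝ) (z : EuclideanSpace ℝ (Fin n)) :
    dotProduct v z ≤ vnorm v * ‖z‖ := by
  have h := aux_dot_le n (WithLp.toLp 2 v) z
  rwa [← vnorm_eq_norm n (WithLp.toLp 2 v)] at h

lemma aux_neg_dot_le' (n : ℕ) (v : Fin n → ℝ) (z : EuclideanSpace ℝ (Fin n)) :
    -(vnorm v * ‖z‖) ≤ dotProduct v z := by
  have h := aux_dot_le' n (-v) z
  rw [neg_dotProduct, vnorm_neg] at h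
  linarith

lemma aux_enorm_add_le {n : ℕ} (v w : EuclideanSpace ℝ (Fin n)) :
    vnorm ((v : Fin n → ℝ) + (w : Fin n → ℝ)) ≤ vnorm v + vnorm w := by
  calc vnorm ((v : Fin n → ℝ) + (w : Fin n → ℝ)) = ‖v + w‖ := vnorm_eq_norm n (v + w)
    _ ≤ ‖v‖ + ‖w‖ := norm_add_le v w
    _ = vnorm v + vnorm w := by rw [vnorm_eq_norm n v, vnorm_eq_norm n w]

lemma aux_enorm_pos {n : ℕ} (v : EuclideanSpace ℝ (Fin n)) (hv : v ≠ 0) : 0 < vnorm v := by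
  rw [vnorm_eq_norm]
  exact norm_pos_iff.mpr hv

lemma aux_pow_le {β : ℝ} (hβ0 : 0 < β) (hβ1 : β < 1) {t : ℝ} (ht : 0 < t) {k : ℕ}
    (hk : (⌈Real.log t / Real.log β⌉ : ℤ) ≤ (k : ℤ)) : β ^ k ≤ t := by
  have hlb : Real.log β < 0 := Real.log_neg hβ0 hβ1
  have h1 : Real.log t / Real.log β ≤ (k : ℝ) := by
    refine le_trans (Int.le_ceil _) ?_
    exact_mod_cast hk
  have h2 : (k : ℝ) * Real.log β ≤ Real.log t := by
    rwa [div_le_iff_of_neg hlb] at h1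
  calc β ^ k = Real.exp ((k : ℝ) * Real.log β) := by
        rw [← Real.log_pow, Real.exp_log (pow_pos hβ0 k)]
    _ ≤ Real.exp (Real.log t) := Real.exp_le_exp.mpr h2
    _ = t := Real.exp_log ht

set_option maxHeartbeats 2000000 in
/-- Theorem 4(b): for `k ≥ max(K̂, 1)` with `K̂ = max(K̂₁, K̂₂)`, the
adaptive trimming index set is empty: `I(x_k) = ∅`. -/
theorem trimmed_index_eventually_empty
    (n_x n_z n_c : ℕ) (hnx : 0 < n_x) (hnz : 0 < n_z) (hnc : 0 < n_c)
    (H : Matrix (Fin n_z) (Fin n_z) ℝ) (hH : H.PosDef)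
    (F : Matrix (Fin n_x) (Fin n_z) ℝ)
    (G : Matrix (Fin n_c) (Fin n_z) ℝ)
    (S : Matrix (Fin n_c) (Fin n_x) ℝ)
    (w : Fin n_c → ℝ)
    (V : EuclideanSpace ℝ (Fin n_x) → EuclideanSpace ℝ (Fin n_z) → ℝ)
    (hV : ∀ x z, V x z = (1 / 2) * dotProduct z (H.mulVec z)
      + dotProduct x (F.mulVec z))
    (Z : EuclideanSpace ℝ (Fin n_x) → Set (Fin n_c) → Set (EuclideanSpace ℝ (Fin n_z)))
    (hZ : ∀ x I, Z x I =
      {z : EuclideanSpace ℝ (Fin n_z) | ∀ j ∈ I, dotProduct (G j) z ≤ dotProduct (S j) x + w j})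
    (hfeas : ∀ x, (Z x Set.univ).Nonempty)
    (zstar : EuclideanSpace ℝ (Fin n_x) → Set (Fin n_c) → EuclideanSpace ℝ (Fin n_z))
    (hmem : ∀ x I, zstar x I ∈ Z x I)
    (hopt : ∀ x I, ∀ z ∈ Z x I, V x (zstar x I) ≤ V x z)
    (huniq : ∀ x I, ∀ z ∈ Z x I, (∀ z' ∈ Z x I, V x z ≤ V x z') → z = zstar x I)
    (κ : ℝ) (hκ0 : 0 ≤ κ)
    (hGLC : ∀ (x₁ x₂ : EuclideanSpace ℝ (Fin n_x)) (I : Set (Fin n_c)),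
      ‖zstar x₁ I - zstar x₂ I‖ ≤ κ * ‖x₁ - x₂‖)
    (hw : ∀ j, 0 < w j)
    (hpos : ∀ j, 0 < κ * Real.sqrt (dotProduct (G j) (G j))
      + Real.sqrt (dotProduct (S j) (S j)))
    (x : ℕ → EuclideanSpace ℝ (Fin n_x)) (hx0 : x 0 ≠ 0)
    (c : ℝ) (hc : 0 < c) (β : ℝ) (hβ0 : 0 < β) (hβ1 : β < 1)
    (hdecay : ∀ k : ℕ, ‖x k‖ ≤ c * ‖x 0‖ * β ^ k)
    (ρ : Fin n_c → ℝ)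
    (hρ : ∀ j, ρ j = c * ‖x 0‖ *
      (κ * Real.sqrt (dotProduct (G j) (G j)) * (1 + β⁻¹)
        + Real.sqrt (dotProduct (S j) (S j))
        + Real.sqrt (dotProduct (Matrix.vecMul (G j) (H⁻¹ * Fᵀ))
            (Matrix.vecMul (G j) (H⁻¹ * Fᵀ))) * β⁻¹))
    (K1 K2 Kh : ℤ)
    (hK1 : K1 = Finset.univ.sup' (Finset.univ_nonempty_iff.mpr ⟨⟨0, hnc⟩⟩)
      (fun j : Fin n_c => ⌈Real.log (w j / (c * ‖x 0‖ * β⁻¹ *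
        (κ * Real.sqrt (dotProduct (G j) (G j))
          + Real.sqrt (dotProduct (S j) (S j))))) / Real.log β⌉))
    (hK2 : K2 = Finset.univ.sup' (Finset.univ_nonempty_iff.mpr ⟨⟨0, hnc⟩⟩)
      (fun j : Fin n_c => ⌈Real.log (w j / ρ j) / Real.log β⌉))
    (hKh : Kh = max K1 K2) :
    ∀ k : ℕ, Kh ≤ (k : ℤ) → 1 ≤ k →
      ({j | dotProduct (G j) (zstar (x (k - 1)) Set.univ)
          = dotProduct (S j) (x (k - 1)) + w j} ∪
        {j | Metric.closedBall (zstar (x (k - 1)) Set.univ) (κ * ‖x k - x (k - 1)‖) ⊆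
          {z : EuclideanSpace ℝ (Fin n_z) |
            dotProduct (G j) z ≤ dotProduct (S j) (x k) + w j}}ᶜ)
        = (∅ : Set (Fin n_c)) := by
  intro k hkK hk1
  classical
  -- basic positivity
  have hx0n : (0:ℝ) < ‖x 0‖ := norm_pos_iff.mpr hx0
  have hc0 : 0 < c * ‖x 0‖ := mul_pos hc hx0n
  have hβinv : (0:ℝ) < β⁻¹ := inv_pos.mpr hβ0
  have hβk : (0:ℝ) < β ^ k := pow_pos hβ0 k
  have hβk1 : (0:ℝ) < β ^ (k-1) := pow_pos hβ0 _
  have hkk : k - 1 + 1 = k := Nat.succ_pred_eq_of_pos hk1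
  have hβsplit : β ^ k = β ^ (k-1) * β := by rw [← pow_succ, hkk]
  have hβne : (β:ℝ) ≠ 0 := ne_of_gt hβ0
  -- rewritten hypotheses in terms of vnorm
  have hposn : ∀ j, 0 < κ * vnorm (G j) + vnorm (S j) := hpos
  -- matrix facts
  have hdet : IsUnit H.det := isUnit_iff_ne_zero.mpr hH.det_pos.ne'
  have hHH : H * H⁻¹ = 1 := Matrix.mul_nonsing_inv H hdet
  have hHsymm : Hᵀ = H := by
    have h := hH.1.eq
    rwa [Matrix.conjTranspose_eq_transpose_of_trivial] at h
  have hHinvPD : (H⁻¹).PosDef := hH.inv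
  set M : Matrix (Fin n_z) (Fin n_x) ℝ := H⁻¹ * Fᵀ with hMdef
  have hρn : ∀ j, ρ j = c * ‖x 0‖ *
      (κ * vnorm (G j) * (1 + β⁻¹) + vnorm (S j)
        + vnorm (Matrix.vecMul (G j) M) * β⁻¹) := hρ
  have hHM : ∀ v : Fin n_x → ℝ, H.mulVec (M.mulVec v) = Fᵀ.mulVec v := by
    intro v
    rw [Matrix.mulVec_mulVec, ← Matrix.mul_assoc, hHH, Matrix.one_mul]
  have hsym : ∀ a b : Fin n_z → ℝ,
      dotProduct a (H.mulVec b) = dotProduct b (H.mulVec a) := by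
    intro a b
    rw [dotProduct_mulVec, ← Matrix.mulVec_transpose, hHsymm, dotProduct_comm]
  have hPSD : ∀ d : Fin n_z → ℝ, 0 ≤ dotProduct d (H.mulVec d) := by
    intro d
    rcases eq_or_ne d 0 with rfl | hd
    · simp
    · have h := hH.dotProduct_mulVec_pos hd
      simpa using h.le
  -- expansion of V
  have hVexp : ∀ (xx : EuclideanSpace ℝ (Fin n_x)) (z₀ d : EuclideanSpace ℝ (Fin n_z)),
      V xx (z₀ + d) = V xx z₀
        + dotProduct (H.mulVec z₀ + Fᵀ.mulVec xx) d
        + (1/2) * dotProduct d (H.mulVec d) := by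
    intro xx z₀ d
    rw [hV, hV, WithLp.ofLp_add, Matrix.mulVec_add, Matrix.mulVec_add, dotProduct_add,
      dotProduct_add, add_dotProduct, add_dotProduct,
      add_dotProduct]
    have h1 : dotProduct d (H.mulVec z₀) = dotProduct z₀ (H.mulVec d) := hsym d z₀
    have h2 : dotProduct (Fᵀ.mulVec xx) d = dotProduct xx (F.mulVec d) := by
      rw [Matrix.mulVec_transpose, ← dotProduct_mulVec]
    have h3 : dotProduct (H.mulVec z₀) d = dotProduct z₀ (H.mulVec d) := by
      rw [dotProduct_comm]; exact hsym d z₀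
    rw [h1, h2, h3]; ring
  -- the unconstrained minimizer
  set uv : EuclideanSpace ℝ (Fin n_x) → EuclideanSpace ℝ (Fin n_z) :=
    fun xx => WithLp.toLp 2 (-(M.mulVec xx) : Fin n_z → ℝ) with huv
  have hgrad : ∀ xx : EuclideanSpace ℝ (Fin n_x),
      H.mulVec (uv xx) + Fᵀ.mulVec xx = 0 := by
    intro xx
    simp only [huv, WithLp.ofLp_toLp]
    rw [Matrix.mulVec_neg, hHM]
    exact neg_add_cancel _
  have huopt : ∀ (xx : EuclideanSpace ℝ (Fin n_x)) (z' : EuclideanSpace ℝ (Fin n_z)),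
      V xx (uv xx) ≤ V xx z' := by
    intro xx z'
    have hz' : z' = uv xx + (z' - uv xx) := by abel
    rw [hz', hVexp, hgrad, zero_dotProduct]
    have := hPSD (z' - uv xx : EuclideanSpace ℝ (Fin n_z))
    linarith
  have hmineq : ∀ (xx : EuclideanSpace ℝ (Fin n_x)) (I : Set (Fin n_c)),
      uv xx ∈ Z xx I → zstar xx I = uv xx := by
    intro xx I hmemu
    exact (huniq xx I (uv xx) hmemu (fun z' _ => huopt xx z')).symm
  have hZemptyZ : ∀ xx : EuclideanSpace ℝ (Fin n_x), zstar xx ∅ = uv xx := by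
    intro xx
    apply hmineq
    rw [hZ]
    intro j hj
    exact absurd hj (Set.notMem_empty j)
  -- dot products with uv
  have hdotuv : ∀ (j : Fin n_c) (xx : EuclideanSpace ℝ (Fin n_x)),
      dotProduct (G j) (uv xx)
        = -(dotProduct (Matrix.vecMul (G j) M) xx) := by
    intro j xx
    simp only [huv, WithLp.ofLp_toLp]
    rw [dotProduct_neg, dotProduct_mulVec]
  -- operator bound for M
  have hMop : ∀ v : EuclideanSpace ℝ (Fin n_x), vnorm (M.mulVec v) ≤ κ * ‖v‖ := by
    intro v
    have h := hGLC v 0 ∅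
    rw [hZemptyZ, hZemptyZ] at h
    have h0 : uv (0 : EuclideanSpace ℝ (Fin n_x)) = 0 := by
      simp only [huv]
      ext i
      simp [Matrix.mulVec, dotProduct]
    rw [h0, sub_zero, sub_zero] at h
    calc vnorm (M.mulVec v) = vnorm (uv v) := by
          simp only [huv, WithLp.ofLp_toLp]; rw [vnorm_neg]
      _ = ‖uv v‖ := vnorm_eq_norm _ _
      _ ≤ κ * ‖v‖ := h
  -- bound on vecMul (G j) M
  have hGHFle : ∀ j, vnorm (Matrix.vecMul (G j) M) ≤ κ * vnorm (G j) := by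
    intro j
    rcases eq_or_lt_of_le (vnorm_nonneg (Matrix.vecMul (G j) M)) with h0 | h0
    · rw [← h0]
      have := mul_nonneg hκ0 (vnorm_nonneg (G j))
      linarith
    · have h1 : vnorm (Matrix.vecMul (G j) M) * vnorm (Matrix.vecMul (G j) M)
          ≤ (κ * vnorm (G j)) * vnorm (Matrix.vecMul (G j) M) := by
        have e1 : vnorm (Matrix.vecMul (G j) M) * vnorm (Matrix.vecMul (G j) M)
            = dotProduct (Matrix.vecMul (G j) M) (Matrix.vecMul (G j) M) := by
          rw [vnorm_eq_norm n_x (WithLp.toLp 2 (Matrix.vecMul (G j) M)), aux_dot_norm n_x (WithLp.toLp 2 (Matrix.vecMul (G j) M))]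
        have e2 : dotProduct (Matrix.vecMul (G j) M) (Matrix.vecMul (G j) M)
            = dotProduct (G j) (M.mulVec (Matrix.vecMul (G j) M)) :=
          (dotProduct_mulVec _ _ _).symm
        have e3 : dotProduct (G j) (M.mulVec (Matrix.vecMul (G j) M))
            ≤ vnorm (G j) * vnorm (M.mulVec (Matrix.vecMul (G j) M)) := by
          have h := aux_dot_le' n_z (G j) (WithLp.toLp 2 (M.mulVec (Matrix.vecMul (G j) M)))
          rwa [← vnorm_eq_norm n_z (WithLp.toLp 2 (M.mulVec (Matrix.vecMul (G j) M)))] at h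
        have e4 : vnorm (M.mulVec (Matrix.vecMul (G j) M))
            ≤ κ * vnorm (Matrix.vecMul (G j) M) := by
          have h := hMop (WithLp.toLp 2 (Matrix.vecMul (G j) M))
          rwa [← vnorm_eq_norm n_x (WithLp.toLp 2 (Matrix.vecMul (G j) M))] at h
        nlinarith [vnorm_nonneg (G j)]
      exact le_of_mul_le_mul_right h1 h0
  -- K1 consequence
  have hK1le : ∀ j, (κ * vnorm (G j) + vnorm (S j)) * (c * ‖x 0‖ * β ^ (k-1)) ≤ w j := by
    intro j
    have hd : (0:ℝ) < c * ‖x 0‖ * β⁻¹ * (κ * vnorm (G j) + vnorm (S j)) :=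
      mul_pos (mul_pos hc0 hβinv) (hposn j)
    have hceil : (⌈Real.log (w j / (c * ‖x 0‖ * β⁻¹ *
        (κ * vnorm (G j) + vnorm (S j)))) / Real.log β⌉ : ℤ) ≤ (k:ℤ) := by
      have h0 : (⌈Real.log (w j / (c * ‖x 0‖ * β⁻¹ *
          (κ * Real.sqrt (dotProduct (G j) (G j))
            + Real.sqrt (dotProduct (S j) (S j))))) / Real.log β⌉ : ℤ) ≤ K1 := by
        rw [hK1]
        exact Finset.le_sup' (fun j : Fin n_c => ⌈Real.log (w j / (c * ‖x 0‖ * β⁻¹ *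
          (κ * Real.sqrt (dotProduct (G j) (G j))
            + Real.sqrt (dotProduct (S j) (S j))))) / Real.log β⌉) (Finset.mem_univ j)
      have h1 : (⌈Real.log (w j / (c * ‖x 0‖ * β⁻¹ *
          (κ * vnorm (G j) + vnorm (S j)))) / Real.log β⌉ : ℤ) ≤ K1 := h0
      have h2 : K1 ≤ Kh := hKh ▸ le_max_left _ _
      omega
    have hpow := aux_pow_le hβ0 hβ1 (div_pos (hw j) hd) hceil
    have h3 : β ^ k * (c * ‖x 0‖ * β⁻¹ * (κ * vnorm (G j) + vnorm (S j))) ≤ w j := by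
      rw [← le_div_iff₀ hd]
      exact hpow
    calc (κ * vnorm (G j) + vnorm (S j)) * (c * ‖x 0‖ * β ^ (k-1))
        = β ^ k * (c * ‖x 0‖ * β⁻¹ * (κ * vnorm (G j) + vnorm (S j))) := by
          rw [hβsplit]; field_simp
      _ ≤ w j := h3
  -- positivity of ρ
  have hρpos : ∀ j, 0 < ρ j := by
    intro j
    rw [hρn j]
    have h1 := hposn j
    have h2 : 0 ≤ κ * vnorm (G j) * β⁻¹ :=
      mul_nonneg (mul_nonneg hκ0 (vnorm_nonneg _)) hβinv.le
    have h3 : 0 ≤ vnorm (Matrix.vecMul (G j) M) * β⁻¹ :=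
      mul_nonneg (vnorm_nonneg _) hβinv.le
    have h4 : 0 < κ * vnorm (G j) * (1 + β⁻¹) + vnorm (S j)
        + vnorm (Matrix.vecMul (G j) M) * β⁻¹ := by nlinarith
    exact mul_pos hc0 h4
  -- K2 consequence
  have hK2le : ∀ j, ρ j * β ^ k ≤ w j := by
    intro j
    have hceil : (⌈Real.log (w j / ρ j) / Real.log β⌉ : ℤ) ≤ (k:ℤ) := by
      have h1 : (⌈Real.log (w j / ρ j) / Real.log β⌉ : ℤ) ≤ K2 := by
        rw [hK2]
        exact Finset.le_sup' (fun j : Fin n_c =>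
          ⌈Real.log (w j / ρ j) / Real.log β⌉) (Finset.mem_univ j)
      have h2 : K2 ≤ Kh := hKh ▸ le_max_right _ _
      omega
    have hpow := aux_pow_le hβ0 hβ1 (div_pos (hw j) (hρpos j)) hceil
    rw [← le_div_iff₀' (hρpos j)]
    exact hpow
  -- expansion of ρ * β^k
  have hρβ : ∀ j, ρ j * β ^ k
      = vnorm (Matrix.vecMul (G j) M) * (c * ‖x 0‖ * β ^ (k-1))
        + κ * vnorm (G j) * (c * ‖x 0‖ * β ^ k)
        + κ * vnorm (G j) * (c * ‖x 0‖ * β ^ (k-1))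
        + vnorm (S j) * (c * ‖x 0‖ * β ^ k) := by
    intro j
    rw [hρn j, hβsplit]
    field_simp
    ring
  -- decay facts
  have hX1 : ‖x (k-1)‖ ≤ c * ‖x 0‖ * β ^ (k-1) := hdecay (k-1)
  have hXk : ‖x k‖ ≤ c * ‖x 0‖ * β ^ k := hdecay k
  have hXpos : (0:ℝ) < c * ‖x 0‖ * β ^ (k-1) := mul_pos hc0 hβk1
  -- feasibility of the unconstrained minimizer at x (k-1)
  have hufeaslem : ∀ j, dotProduct (G j) (uv (x (k-1)))
      ≤ dotProduct (S j) (x (k-1)) + w j := by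
    intro j
    have e2 : -(dotProduct (Matrix.vecMul (G j) M) (x (k-1)))
        ≤ vnorm (Matrix.vecMul (G j) M) * ‖x (k-1)‖ := by
      have := aux_neg_dot_le' n_x (Matrix.vecMul (G j) M) (x (k-1))
      linarith
    have e3 : -(vnorm (S j) * ‖x (k-1)‖) ≤ dotProduct (S j) (x (k-1)) :=
      aux_neg_dot_le' n_x (S j) (x (k-1))
    have e4 : vnorm (Matrix.vecMul (G j) M) * ‖x (k-1)‖ ≤ κ * vnorm (G j) * ‖x (k-1)‖ :=
      mul_le_mul_of_nonneg_right (hGHFle j) (norm_nonneg _)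
    have e5 : (κ * vnorm (G j) + vnorm (S j)) * ‖x (k-1)‖
        ≤ (κ * vnorm (G j) + vnorm (S j)) * (c * ‖x 0‖ * β ^ (k-1)) :=
      mul_le_mul_of_nonneg_left hX1 (hposn j).le
    have e6 := hK1le j
    rw [hdotuv j]
    nlinarith
  have hufeas : uv (x (k-1)) ∈ Z (x (k-1)) Set.univ := by
    rw [hZ]
    intro j _
    exact hufeaslem j
  have hzx' : zstar (x (k-1)) Set.univ = uv (x (k-1)) := hmineq _ _ hufeas
  -- the 2κ‖G‖ claim
  have h2κg : ∀ j, vnorm (Matrix.vecMul (G j) M + S j) ≤ 2 * κ * vnorm (G j) := by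
    intro j
    rcases eq_or_ne (G j) 0 with hG0 | hG0
    · -- G j = 0 forces S j = 0 via feasibility
      have hS0 : S j = 0 := by
        by_contra hS
        have hSn : (0:ℝ) < vnorm (S j) := aux_enorm_pos (WithLp.toLp 2 (S j)) (by rwa [Ne, WithLp.toLp_eq_zero])
        set xbar : EuclideanSpace ℝ (Fin n_x) :=
          WithLp.toLp 2 ((-(w j + 1) / (vnorm (S j) ^ 2)) • (S j : Fin n_x → ℝ)) with hxbar
        obtain ⟨z, hz⟩ := hfeas xbar
        rw [hZ] at hz
        have hzj := hz j (Set.mem_univ j)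
        have e1 : dotProduct (S j) xbar = -(w j + 1) := by
          rw [hxbar, WithLp.ofLp_toLp, dotProduct_smul, smul_eq_mul]
          have e2 : dotProduct (S j) (S j) = vnorm (S j) ^ 2 := by
            rw [vnorm_eq_norm n_x (WithLp.toLp 2 (S j)), aux_dot_norm n_x (WithLp.toLp 2 (S j))]; ring
          rw [e2]
          field_simp
        rw [hG0, zero_dotProduct, e1] at hzj
        linarith
      have hz0 : Matrix.vecMul (G j) M + S j = 0 := by
        rw [hG0, hS0, Matrix.zero_vecMul, add_zero]
      rw [hz0]
      have : vnorm (0 : Fin n_x → ℝ) = 0 := by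
        simp [vnorm, dotProduct]
      rw [this]
      have := mul_nonneg hκ0 (vnorm_nonneg (G j))
      linarith
    · -- main case
      set a : EuclideanSpace ℝ (Fin n_z) := WithLp.toLp 2 ((H⁻¹).mulVec (G j)) with ha
      have hq : 0 < dotProduct (G j) ((H⁻¹).mulVec (G j)) := by
        have h := hHinvPD.dotProduct_mulVec_pos hG0
        simpa using h
      have hHa : H.mulVec a = G j := by
        rw [ha, WithLp.ofLp_toLp, Matrix.mulVec_mulVec, hHH, Matrix.one_mulVec]
      have hGa : dotProduct (G j) a = dotProduct (G j) ((H⁻¹).mulVec (G j)) := by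
        rw [ha]
      have hanz : (0:ℝ) < ‖a‖ := by
        rcases eq_or_lt_of_le (norm_nonneg a) with h0 | h0
        · exfalso
          have ha0 : a = 0 := norm_eq_zero.mp h0.symm
          rw [ha0] at hGa
          rw [WithLp.ofLp_zero, dotProduct_zero] at hGa
          linarith [hq, hGa]
        · exact h0
      have hqga : dotProduct (G j) ((H⁻¹).mulVec (G j)) ≤ vnorm (G j) * ‖a‖ := by
        rw [← hGa]
        exact aux_dot_le' n_z (G j) a
      set rvE : EuclideanSpace ℝ (Fin n_x) :=
        WithLp.toLp 2 (Matrix.vecMul (G j) M + S j : Fin n_x → ℝ) with hrvE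
      have hbr : vnorm (Matrix.vecMul (G j) M + S j) = ‖rvE‖ := by
        rw [← vnorm_eq_norm n_x rvE]
      rw [hbr]
      rcases eq_or_lt_of_le (norm_nonneg rvE) with hr0 | hr0
      · rw [← hr0]
        have := mul_nonneg hκ0 (vnorm_nonneg (G j))
        linarith
      · -- key closed-form lemma
        have hkey : ∀ (xx : EuclideanSpace ℝ (Fin n_x)) (lam : ℝ), 0 ≤ lam →
            dotProduct (Matrix.vecMul (G j) M) xx + dotProduct (S j) xx
              = -(w j) - lam * dotProduct (G j) ((H⁻¹).mulVec (G j)) →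
            zstar xx {j} = uv xx - lam • a := by
          intro xx lam hlam hdot
          have hGz₀ : dotProduct (G j) (uv xx - lam • a)
              = dotProduct (S j) xx + w j := by
            rw [dotProduct_sub, dotProduct_smul, smul_eq_mul, hGa, hdotuv j]
            linarith
          have hz₀mem : (uv xx - lam • a) ∈ Z xx {j} := by
            rw [hZ]
            intro i hi
            rw [Set.mem_singleton_iff] at hi
            subst hi
            exact le_of_eq hGz₀
          have hgrad₀ : H.mulVec (uv xx - lam • a) + Fᵀ.mulVec xx
              = -(lam • (G j)) := by
            rw [Matrix.mulVec_sub, Matrix.mulVec_smul, hHa, sub_add_eq_add_sub, hgrad xx,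
              zero_sub]
          have hoptz₀ : ∀ z' ∈ Z xx {j}, V xx (uv xx - lam • a) ≤ V xx z' := by
            intro z' hz'
            have hz'j : dotProduct (G j) z'
                ≤ dotProduct (S j) xx + w j := by
              rw [hZ] at hz'
              exact hz' j rfl
            have hdec : z' = (uv xx - lam • a) + (z' - (uv xx - lam • a)) := by abel
            rw [hdec, hVexp]
            simp only [WithLp.ofLp_sub, WithLp.ofLp_smul]
            rw [hgrad₀]
            have e1 : dotProduct (-(lam • (G j))) (z' - (uv xx - lam • a))
                = -(lam * (dotProduct (G j) z'
                  - dotProduct (G j) (uv xx - lam • a))) := by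
              rw [neg_dotProduct, smul_dotProduct, smul_eq_mul,
                dotProduct_sub]
            rw [e1, hGz₀]
            have e2 : 0 ≤ dotProduct (z' - (uv xx - lam • a))
                (H.mulVec (z' - (uv xx - lam • a))) := hPSD _
            simp only [WithLp.ofLp_sub, WithLp.ofLp_smul] at e2
            nlinarith
          exact (huniq xx {j} _ hz₀mem hoptz₀).symm
        -- apply at two points
        set T : ℝ := ‖rvE‖ ^ 2 with hT
        have hTpos : 0 < T := by rw [hT]; positivity
        have hrr : dotProduct rvE rvE = T := by
          rw [aux_dot_norm n_x rvE, hT]; ring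
        set q : ℝ := dotProduct (G j) ((H⁻¹).mulVec (G j)) with hqdef
        set x₁ : EuclideanSpace ℝ (Fin n_x) := (-(w j) / T) • rvE with hx₁
        set x₂ : EuclideanSpace ℝ (Fin n_x) := x₁ - (q / T) • rvE with hx₂
        have hsplit : ∀ xx : EuclideanSpace ℝ (Fin n_x),
            dotProduct (Matrix.vecMul (G j) M) xx + dotProduct (S j) xx
              = dotProduct rvE xx := by
          intro xx
          rw [hrvE, add_dotProduct]
        have hd1 : dotProduct rvE x₁ = -(w j) - 0 * q := by
          rw [hx₁, WithLp.ofLp_smul, dotProduct_smul, smul_eq_mul, hrr]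
          field_simp
          ring
        have hd2 : dotProduct rvE x₂ = -(w j) - 1 * q := by
          rw [hx₂, hx₁]
          simp only [WithLp.ofLp_sub, WithLp.ofLp_smul, dotProduct_sub, dotProduct_smul, smul_eq_mul, hrr]
          field_simp
        have hz₁ := hkey x₁ 0 le_rfl (by rw [hsplit x₁, hd1])
        have hz₂ := hkey x₂ 1 zero_le_one (by rw [hsplit x₂, hd2])
        rw [zero_smul, sub_zero] at hz₁
        rw [one_smul] at hz₂
        -- a as a difference of optimizers
        have habel : a = (uv x₂ - uv x₁) + (zstar x₁ {j} - zstar x₂ {j}) := by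
          rw [hz₁, hz₂]; abel
        have htr1 : ‖uv x₂ - uv x₁‖ ≤ κ * ‖x₁ - x₂‖ := by
          have h := hGLC x₂ x₁ ∅
          rw [hZemptyZ, hZemptyZ] at h
          calc ‖uv x₂ - uv x₁‖ ≤ κ * ‖x₂ - x₁‖ := h
            _ = κ * ‖x₁ - x₂‖ := by rw [norm_sub_rev]
        have htr2 : ‖zstar x₁ {j} - zstar x₂ {j}‖ ≤ κ * ‖x₁ - x₂‖ := hGLC x₁ x₂ {j}
        have hna : ‖a‖ ≤ 2 * κ * ‖x₁ - x₂‖ := by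
          calc ‖a‖ = ‖(uv x₂ - uv x₁) + (zstar x₁ {j} - zstar x₂ {j})‖ := by rw [← habel]
            _ ≤ ‖uv x₂ - uv x₁‖ + ‖zstar x₁ {j} - zstar x₂ {j}‖ := norm_add_le _ _
            _ ≤ κ * ‖x₁ - x₂‖ + κ * ‖x₁ - x₂‖ := add_le_add htr1 htr2
            _ = 2 * κ * ‖x₁ - x₂‖ := by ring
        have hx12 : x₁ - x₂ = (q / T) • rvE := by
          rw [hx₂]; abel
        have hn12 : ‖x₁ - x₂‖ = q / ‖rvE‖ := by
          have hrne : ‖rvE‖ ≠ 0 := ne_of_gt hr0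
          rw [hx12, norm_smul, Real.norm_eq_abs, abs_of_pos (div_pos hq hTpos), hT, pow_two]
          field_simp
        -- conclude
        have hfin : ‖a‖ ≤ 2 * κ * (q / ‖rvE‖) := by
          rw [hn12] at hna
          exact hna
        have h1 : ‖rvE‖ * ‖a‖ ≤ 2 * κ * q := by
          have h2 : ‖rvE‖ * (2 * κ * (q / ‖rvE‖)) = 2 * κ * q := by
            field_simp
          calc ‖rvE‖ * ‖a‖ ≤ ‖rvE‖ * (2 * κ * (q / ‖rvE‖)) :=
              mul_le_mul_of_nonneg_left hfin (norm_nonneg _)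
            _ = 2 * κ * q := h2
        have h3 : 2 * κ * q ≤ 2 * κ * (vnorm (G j) * ‖a‖) := by
          apply mul_le_mul_of_nonneg_left hqga
          positivity
        have h4 : ‖rvE‖ * ‖a‖ ≤ (2 * κ * vnorm (G j)) * ‖a‖ := by
          calc ‖rvE‖ * ‖a‖ ≤ 2 * κ * (vnorm (G j) * ‖a‖) := le_trans h1 h3
            _ = (2 * κ * vnorm (G j)) * ‖a‖ := by ring
        exact le_of_mul_le_mul_right h4 hanz
  -- Part A: strict inactivity at x (k-1)
  have hstrict : ∀ j, dotProduct (G j) (uv (x (k-1)))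
      < dotProduct (S j) (x (k-1)) + w j := by
    intro j
    have hrle : vnorm (Matrix.vecMul (G j) M + S j)
        ≤ vnorm (Matrix.vecMul (G j) M) + vnorm (S j) := aux_enorm_add_le (WithLp.toLp 2 _) (WithLp.toLp 2 _)
    have hGle := hGHFle j
    have hrX : vnorm (Matrix.vecMul (G j) M + S j) * (c * ‖x 0‖ * β ^ (k-1)) < w j := by
      rcases lt_or_ge (vnorm (Matrix.vecMul (G j) M + S j))
          (κ * vnorm (G j) + vnorm (S j)) with hlt | hge
      · exact lt_of_lt_of_le (mul_lt_mul_of_pos_right hlt hXpos) (hK1le j)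
      · have h2κ := h2κg j
        have h3 : κ * vnorm (G j) ≤ vnorm (Matrix.vecMul (G j) M) := by linarith
        have hs_le : vnorm (S j) ≤ κ * vnorm (G j) := by linarith
        have hκgpos : 0 < κ * vnorm (G j) := by
          have := hposn j
          linarith
        have h1mβ : (0:ℝ) ≤ 1 - β := by linarith
        have k2 : vnorm (S j) * (1 - β) < κ * vnorm (G j) * (1 + β) := by
          nlinarith [mul_le_mul_of_nonneg_right hs_le h1mβ, mul_pos hκgpos hβ0]
        have hchain : vnorm (Matrix.vecMul (G j) M + S j) * (c * ‖x 0‖ * β ^ (k-1))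
            < ρ j * β ^ k := by
          rw [hρβ j, hβsplit]
          have hk1' : vnorm (Matrix.vecMul (G j) M + S j) * (c * ‖x 0‖ * β ^ (k-1))
              ≤ (vnorm (Matrix.vecMul (G j) M) + vnorm (S j)) * (c * ‖x 0‖ * β ^ (k-1)) :=
            mul_le_mul_of_nonneg_right hrle hXpos.le
          nlinarith [mul_lt_mul_of_pos_right k2 hXpos,
            mul_le_mul_of_nonneg_right h3 hXpos.le]
        exact lt_of_lt_of_le hchain (hK2le j)
    have e1 : -(vnorm (Matrix.vecMul (G j) M + S j) * ‖x (k-1)‖)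
        ≤ dotProduct (Matrix.vecMul (G j) M + S j) (x (k-1)) :=
      aux_neg_dot_le' n_x _ (x (k-1))
    have e2 : dotProduct (Matrix.vecMul (G j) M + S j) (x (k-1))
        = dotProduct (Matrix.vecMul (G j) M) (x (k-1))
          + dotProduct (S j) (x (k-1)) := add_dotProduct _ _ _
    have e3 : vnorm (Matrix.vecMul (G j) M + S j) * ‖x (k-1)‖
        ≤ vnorm (Matrix.vecMul (G j) M + S j) * (c * ‖x 0‖ * β ^ (k-1)) :=
      mul_le_mul_of_nonneg_left hX1 (vnorm_nonneg _)
    rw [hdotuv j]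
    nlinarith
  -- Part B: ball inclusion
  have hball : ∀ j, Metric.closedBall (uv (x (k-1))) (κ * ‖x k - x (k-1)‖) ⊆
      {z : EuclideanSpace ℝ (Fin n_z) |
        dotProduct (G j) z ≤ dotProduct (S j) (x k) + w j} := by
    intro j z hzball
    have hdz : ‖z - uv (x (k-1))‖ ≤ κ * ‖x k - x (k-1)‖ := by
      rw [← dist_eq_norm]
      exact Metric.mem_closedBall.mp hzball
    have e1 : dotProduct (G j) z = dotProduct (G j) (uv (x (k-1)))
        + dotProduct (G j) (z - uv (x (k-1))) := by
      rw [dotProduct_sub]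
      ring
    have b1 : dotProduct (G j) (uv (x (k-1)))
        ≤ vnorm (Matrix.vecMul (G j) M) * ‖x (k-1)‖ := by
      rw [hdotuv j]
      have := aux_neg_dot_le' n_x (Matrix.vecMul (G j) M) (x (k-1))
      linarith
    have b2 : dotProduct (G j) (z - uv (x (k-1)))
        ≤ κ * vnorm (G j) * ‖x k‖ + κ * vnorm (G j) * ‖x (k-1)‖ := by
      have c1 : dotProduct (G j) (z - uv (x (k-1)))
          ≤ vnorm (G j) * ‖z - uv (x (k-1))‖ :=
        aux_dot_le' n_z (G j) _
      have c2 : ‖z - uv (x (k-1))‖ ≤ κ * (‖x k‖ + ‖x (k-1)‖) := by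
        have h1 := norm_sub_le (x k) (x (k-1))
        have h2 : κ * ‖x k - x (k-1)‖ ≤ κ * (‖x k‖ + ‖x (k-1)‖) :=
          mul_le_mul_of_nonneg_left h1 hκ0
        linarith
      have c3 : vnorm (G j) * ‖z - uv (x (k-1))‖
          ≤ vnorm (G j) * (κ * (‖x k‖ + ‖x (k-1)‖)) :=
        mul_le_mul_of_nonneg_left c2 (vnorm_nonneg _)
      nlinarith [c1]
    have b3 : -(vnorm (S j) * ‖x k‖) ≤ dotProduct (S j) (x k) :=
      aux_neg_dot_le' n_x (S j) (x k)
    have t1 : vnorm (Matrix.vecMul (G j) M) * ‖x (k-1)‖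
        ≤ vnorm (Matrix.vecMul (G j) M) * (c * ‖x 0‖ * β ^ (k-1)) :=
      mul_le_mul_of_nonneg_left hX1 (vnorm_nonneg _)
    have hκg : 0 ≤ κ * vnorm (G j) := mul_nonneg hκ0 (vnorm_nonneg _)
    have t2 : κ * vnorm (G j) * ‖x (k-1)‖ ≤ κ * vnorm (G j) * (c * ‖x 0‖ * β ^ (k-1)) :=
      mul_le_mul_of_nonneg_left hX1 hκg
    have t3 : κ * vnorm (G j) * ‖x k‖ ≤ κ * vnorm (G j) * (c * ‖x 0‖ * β ^ k) :=
      mul_le_mul_of_nonneg_left hXk hκg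
    have t4 : vnorm (S j) * ‖x k‖ ≤ vnorm (S j) * (c * ‖x 0‖ * β ^ k) :=
      mul_le_mul_of_nonneg_left hXk (vnorm_nonneg _)
    have hρk := hK2le j
    rw [hρβ j] at hρk
    show dotProduct (G j) z ≤ dotProduct (S j) (x k) + w j
    linarith
  -- assemble
  apply Set.eq_empty_iff_forall_notMem.mpr
  intro j hj
  rcases hj with hact | hD
  · rw [Set.mem_setOf_eq, hzx'] at hact
    exact absurd hact (ne_of_lt (hstrict j))
  · rw [Set.mem_compl_iff, Set.mem_setOf_eq, hzx'] at hD
    exact hD (hball j)
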